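/- Let n ≥ 2, (c_0, c_1, c_2) ∈ Z_4 × Z_{2n} × Z_{2n²}, and suppose x, x' ∈ C_n(c_0,c_1,c_2) and d_1, e_1, d_2, e_2 ∈ {1,…,n} with d_1 ≠ e_1, d_2 ≠ e_2, and E(x, d_1, e_1) = E(x', d_2, e_2). If d_1 ≤ d_2 < e_1 and d_1 ≤ d_2 < e_2 (Case (vi)), then x = x'. -/

import Mathlib

/-- The bit of `x` at 1-based position `p` (junk value `0` out of range). -/
def getBit {n : ℕ} (x : Fin n → Fin 2) (p : ℕ) : Fin 2 :=
  if h : p - 1 < n then x ⟨p - 1, h⟩ else 0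

/-- Hamming weight of a binary sequence. -/
def wt {n : ℕ} (x : Fin n → Fin 2) : ℕ := ∑ i, (x i : ℕ)

/-- The `j`-th order VT syndrome `f_j(x) = Σ_{i=1}^n (Σ_{ℓ=1}^i ℓ^{j-1}) x_i`. -/
def vtSyn {n : ℕ} (j : ℕ) (x : Fin n → Fin 2) : ℕ :=
  ∑ i : Fin n, (∑ l ∈ Finset.Icc 1 ((i : ℕ) + 1), l ^ (j - 1)) * (x i : ℕ)

/-- Substitute the symbol at 1-based position `e` of `x` with its complement. -/
def substAt {n : ℕ} (x : Fin n → Fin 2) (e : ℕ) : Fin n → Fin 2 :=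
  fun i => if (i : ℕ) + 1 = e then 1 - x i else x i

/-- Delete the symbol at 1-based position `d` of `x`. -/
def delAt {n : ℕ} (x : Fin n → Fin 2) (d : ℕ) : Fin (n - 1) → Fin 2 :=
  fun i => if (i : ℕ) + 1 < d then getBit x ((i : ℕ) + 1) else getBit x ((i : ℕ) + 2)

/-- `E(x,d,e)`: delete the symbol at position `d` and substitute the symbol at
position `e` of `x` (positions are 1-based, taken in the original `x`). -/
def delSub {n : ℕ} (x : Fin n → Fin 2) (d e : ℕ) : Fin (n - 1) → Fin 2 :=
  delAt (substAt x e) d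

/-- The single-deletion single-substitution error ball `B_{1,1}(x)`. -/
def ball {n : ℕ} (x : Fin n → Fin 2) : Set (Fin (n - 1) → Fin 2) :=
  {y | (∃ d ∈ Finset.Icc 1 n, y = delAt x d) ∨
       ∃ d ∈ Finset.Icc 1 n, ∃ e ∈ Finset.Icc 1 n, d ≠ e ∧ y = delSub x d e}

/-- The code `C_n(c0,c1,c2)`. -/
def codeC (n : ℕ) (c0 c1 c2 : ℕ) : Finset (Fin n → Fin 2) :=
  Finset.univ.filter fun x =>
    x ≠ (fun _ => 0) ∧ x ≠ (fun _ => 1) ∧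
    wt x % 4 = c0 ∧ vtSyn 1 x % (2 * n) = c1 ∧ vtSyn 2 x % (2 * n ^ 2) = c2

/-- `u_i = Σ_{ℓ=i}^n x_ℓ − Σ_{ℓ=i}^n x'_ℓ` (1-based positions, value in `ℤ`). -/
def uSeq {n : ℕ} (x x' : Fin n → Fin 2) (i : ℕ) : ℤ :=
  (∑ l ∈ Finset.Icc i n, ((getBit x l : ℕ) : ℤ)) -
    ∑ l ∈ Finset.Icc i n, ((getBit x' l : ℕ) : ℤ)

open Finset

private def Z {n : ℕ} (x : Fin n → Fin 2) (p : ℕ) : ℤ := ((getBit x p : ℕ) : ℤ)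

private lemma Z_nonneg {n : ℕ} (x : Fin n → Fin 2) (p : ℕ) : 0 ≤ Z x p :=
  Int.natCast_nonneg _

private lemma Z_le_one {n : ℕ} (x : Fin n → Fin 2) (p : ℕ) : Z x p ≤ 1 := by
  unfold Z
  have := (getBit x p).isLt
  omega

private lemma getBit_fin {n : ℕ} (x : Fin n → Fin 2) (i : Fin n) :
    getBit x ((i : ℕ) + 1) = x i := by
  unfold getBit
  simp [Nat.add_sub_cancel, i.isLt]

private lemma sum_Z {n : ℕ} (x : Fin n → Fin 2) (g : ℕ → ℤ) :
    ∑ p ∈ Icc 1 n, g p * Z x p = ∑ i : Fin n, g ((i : ℕ) + 1) * ((x i : ℕ) : ℤ) := by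
  have h1 : ∑ i : Fin n, g ((i : ℕ) + 1) * ((x i : ℕ) : ℤ)
      = ∑ i : Fin n, g ((i : ℕ) + 1) * Z x ((i : ℕ) + 1) := by
    apply Finset.sum_congr rfl
    intro i _
    rw [Z, getBit_fin]
  rw [h1, Fin.sum_univ_eq_sum_range (fun j => g (j + 1) * Z x (j + 1)),
    ← Finset.Ico_add_one_right_eq_Icc, Finset.sum_Ico_eq_sum_range]
  apply Finset.sum_congr rfl
  intro i _
  rw [Nat.add_comm 1 i]

private lemma cast_wt {n : ℕ} (x : Fin n → Fin 2) :
    (wt x : ℤ) = ∑ p ∈ Icc 1 n, Z x p := by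
  unfold wt
  push_cast
  have := sum_Z x (fun _ => (1 : ℤ))
  simpa using this.symm

private lemma cast_vt {n : ℕ} (x : Fin n → Fin 2) (j : ℕ) :
    (vtSyn j x : ℤ) = ∑ p ∈ Icc 1 n, (∑ l ∈ Icc 1 p, (l : ℤ) ^ (j - 1)) * Z x p := by
  unfold vtSyn
  push_cast
  rw [sum_Z x (fun p => ∑ l ∈ Icc 1 p, (l : ℤ) ^ (j - 1))]

private def wf (p : ℕ) : ℤ := ∑ l ∈ Finset.Icc 1 p, (l : ℤ)

private lemma wf_succ (p : ℕ) (hp : 1 ≤ p) : wf p = wf (p - 1) + p := by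
  unfold wf
  rw [← Finset.Ico_add_one_right_eq_Icc, Finset.sum_Ico_succ_top (by omega : 1 ≤ p)]
  have h2 : Ico 1 p = Icc 1 (p - 1) := by
    rw [← Finset.Ico_add_one_right_eq_Icc]
    congr 1
    omega
  rw [h2]

private lemma wf_diff (a b : ℕ) (h : b ≤ a) :
    wf a - wf b = ∑ l ∈ Ico (b + 1) (a + 1), (l : ℤ) := by
  unfold wf
  rw [← Finset.Ico_add_one_right_eq_Icc, ← Finset.Ico_add_one_right_eq_Icc,
    ← Finset.sum_Ico_consecutive (fun l => (l : ℤ)) (by omega : 1 ≤ b + 1) (by omega : b + 1 ≤ a + 1)]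
  ring

private lemma wf_mono {a b : ℕ} (h : b ≤ a) : wf b ≤ wf a := by
  have := wf_diff a b h
  have h2 : 0 ≤ ∑ l ∈ Ico (b + 1) (a + 1), (l : ℤ) :=
    Finset.sum_nonneg fun l _ => Int.natCast_nonneg _
  omega

private lemma wf_one : wf 1 = 1 := by decide

private lemma wf_diff_ge (a b : ℕ) (h : b ≤ a) :
    ((b : ℤ) + 1) * ((a : ℤ) - b) ≤ wf a - wf b := by
  rw [wf_diff a b h]
  have hcard : (Ico (b + 1) (a + 1)).card = a - b := by
    rw [Nat.card_Ico]; omega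
  have := Finset.card_nsmul_le_sum (Ico (b + 1) (a + 1)) (fun l => (l : ℤ)) ((b : ℤ) + 1)
    (fun l hl => by
      have := Finset.mem_Ico.mp hl
      have h5 : b + 1 ≤ l := this.1
      show ((b : ℤ) + 1) ≤ (l : ℤ)
      exact_mod_cast h5)
  rw [hcard] at this
  have hab : ((a - b : ℕ) : ℤ) = (a : ℤ) - b := by omega
  calc ((b : ℤ) + 1) * ((a : ℤ) - b) = (a - b : ℕ) • ((b : ℤ) + 1) := by
        rw [nsmul_eq_mul, hab]; ring
    _ ≤ _ := this

private lemma wf_le_sq (p : ℕ) : wf p ≤ (p : ℤ) ^ 2 := by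
  induction p with
  | zero => decide
  | succ q ih =>
    rw [wf_succ (q + 1) (by omega)]
    simp only [Nat.add_sub_cancel]
    push_cast
    nlinarith [ih]

private lemma dvd_small (N m : ℤ) (h : N ∣ m) (h2 : |m| < N) : m = 0 := by
  by_contra hm
  have h3 : N ∣ |m| := (dvd_abs _ _).mpr h
  have h4 : N ≤ |m| := Int.le_of_dvd (abs_pos.mpr hm) h3
  omega

private lemma getBit_substAt {n : ℕ} (x : Fin n → Fin 2) (e p : ℕ)
    (h1 : 1 ≤ p) (h2 : p ≤ n) :
    getBit (substAt x e) p = if p = e then 1 - getBit x p else getBit x p := by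
  unfold getBit substAt
  have h : p - 1 < n := by omega
  have h' : p - 1 + 1 = p := by omega
  simp only [dif_pos h, h']

private lemma finTwoInj {a b : Fin 2} (h : ((a : ℕ) : ℤ) = ((b : ℕ) : ℤ)) : a = b := by
  revert h
  revert a b
  decide

private lemma finTwoFlip {a b : Fin 2} (h : a = 1 - b) : ((a : ℕ) : ℤ) = 1 - ((b : ℕ) : ℤ) := by
  revert h; revert a b; decide

private lemma finTwoFlipCancel {a b : Fin 2} (h : 1 - a = 1 - b) : a = b := by
  revert h; revert a b; decide

section Facts
variable {n : ℕ} (x x' : Fin n → Fin 2) (d1 e1 d2 e2 : ℕ)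

private lemma fact1 (hE : delSub x d1 e1 = delSub x' d2 e2)
    (h12 : d1 ≤ d2) (he1 : d2 < e1) (he1n : e1 ≤ n) (he2 : d2 < e2)
    (p : ℕ) (hp1 : 1 ≤ p) (hp : p < d1) : getBit x p = getBit x' p := by
  have hi : p - 1 < n - 1 := by omega
  have h := congrFun hE ⟨p - 1, hi⟩
  unfold delSub delAt at h
  simp only at h
  have hp' : p - 1 + 1 = p := by omega
  rw [hp', if_pos (by omega : p < d1), if_pos (by omega : p < d2)] at h
  rw [getBit_substAt x e1 p hp1 (by omega), getBit_substAt x' e2 p hp1 (by omega)] at h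
  rw [if_neg (by omega : ¬ p = e1), if_neg (by omega : ¬ p = e2)] at h
  exact h

private lemma fact2 (hE : delSub x d1 e1 = delSub x' d2 e2)
    (hd1 : 1 ≤ d1) (he1 : d2 < e1) (he1n : e1 ≤ n) (he2 : d2 < e2) (he2n : e2 ≤ n)
    (p : ℕ) (hp1 : d1 ≤ p) (hp : p < d2) : getBit x' p = getBit x (p + 1) := by
  have hi : p - 1 < n - 1 := by omega
  have h := congrFun hE ⟨p - 1, hi⟩
  unfold delSub delAt at h
  simp only at h
  have hp' : p - 1 + 1 = p := by omega
  have hp'' : p - 1 + 2 = p + 1 := by omega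
  rw [hp', hp'', if_neg (by omega : ¬ p < d1), if_pos (by omega : p < d2)] at h
  rw [getBit_substAt x e1 (p + 1) (by omega) (by omega),
    getBit_substAt x' e2 p (by omega) (by omega)] at h
  rw [if_neg (by omega : ¬ p + 1 = e1), if_neg (by omega : ¬ p = e2)] at h
  exact h.symm

private lemma fact3 (hE : delSub x d1 e1 = delSub x' d2 e2)
    (hd1 : 1 ≤ d1) (h12 : d1 ≤ d2) (he1 : d2 < e1) (he1n : e1 ≤ n) (he2 : d2 < e2)
    (p : ℕ) (hp1 : d2 < p) (hp : p ≤ n) :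
    (if p = e1 then 1 - getBit x p else getBit x p)
      = (if p = e2 then 1 - getBit x' p else getBit x' p) := by
  have hi : p - 2 < n - 1 := by omega
  have h := congrFun hE ⟨p - 2, hi⟩
  unfold delSub delAt at h
  simp only at h
  have hp' : p - 2 + 1 = p - 1 := by omega
  have hp'' : p - 2 + 2 = p := by omega
  rw [hp', hp'', if_neg (by omega : ¬ p - 1 < d1), if_neg (by omega : ¬ p - 1 < d2)] at h
  rw [getBit_substAt x e1 p (by omega) hp, getBit_substAt x' e2 p (by omega) hp] at h
  exact h

end Facts

private lemma delta_split {n : ℕ} (x x' : Fin n → Fin 2) (g : ℕ → ℤ) (d1 d2 : ℕ)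
    (hd1 : 1 ≤ d1) (h12 : d1 ≤ d2) (h2n : d2 ≤ n)
    (f1 : ∀ p, 1 ≤ p → p < d1 → Z x p = Z x' p)
    (f2 : ∀ p, d1 ≤ p → p < d2 → Z x' p = Z x (p + 1)) :
    (∑ p ∈ Icc 1 n, g p * Z x' p) - ∑ p ∈ Icc 1 n, g p * Z x p =
    g d2 * Z x' d2 - g d1 * Z x d1
      + (∑ p ∈ Ico (d1 + 1) (d2 + 1), (g (p - 1) - g p) * Z x p)
      + ∑ p ∈ Ico (d2 + 1) (n + 1), g p * (Z x' p - Z x p) := by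
  have h0 : ∀ y : Fin n → Fin 2, ∑ p ∈ Icc 1 n, g p * Z y p =
      (∑ p ∈ Ico 1 d1, g p * Z y p) + ((∑ p ∈ Ico d1 (d2 + 1), g p * Z y p)
        + ∑ p ∈ Ico (d2 + 1) (n + 1), g p * Z y p) := by
    intro y
    rw [Finset.sum_Ico_consecutive _ (by omega : d1 ≤ d2 + 1) (by omega : d2 + 1 ≤ n + 1),
      Finset.sum_Ico_consecutive _ (by omega : 1 ≤ d1) (by omega : d1 ≤ n + 1),
      Finset.Ico_add_one_right_eq_Icc]
  rw [h0 x', h0 x]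
  have hA : ∑ p ∈ Ico 1 d1, g p * Z x' p = ∑ p ∈ Ico 1 d1, g p * Z x p := by
    apply Finset.sum_congr rfl
    intro p hp
    have := Finset.mem_Ico.mp hp
    rw [f1 p this.1 this.2]
  have hB' : ∑ p ∈ Ico d1 (d2 + 1), g p * Z x' p
      = (∑ p ∈ Ico (d1 + 1) (d2 + 1), g (p - 1) * Z x p) + g d2 * Z x' d2 := by
    rw [Finset.sum_Ico_succ_top (by omega : d1 ≤ d2)]
    congr 1
    have h1 : ∑ p ∈ Ico d1 d2, g p * Z x' p = ∑ p ∈ Ico d1 d2, g p * Z x (p + 1) := by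
      apply Finset.sum_congr rfl
      intro p hp
      have := Finset.mem_Ico.mp hp
      rw [f2 p this.1 this.2]
    rw [h1, Finset.sum_Ico_eq_sum_range, Finset.sum_Ico_eq_sum_range]
    have hc : d2 - d1 = d2 + 1 - (d1 + 1) := by omega
    rw [← hc]
    apply Finset.sum_congr rfl
    intro i _
    have e1 : d1 + 1 + i - 1 = d1 + i := by omega
    have e2 : d1 + 1 + i = d1 + i + 1 := by omega
    rw [e1, e2]
  have hB : ∑ p ∈ Ico d1 (d2 + 1), g p * Z x p
      = g d1 * Z x d1 + ∑ p ∈ Ico (d1 + 1) (d2 + 1), g p * Z x p := by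
    rw [Finset.sum_eq_sum_Ico_succ_bot (by omega : d1 < d2 + 1)]
  rw [hA, hB', hB]
  have hm : ∑ p ∈ Ico (d1 + 1) (d2 + 1), (g (p - 1) - g p) * Z x p
      = (∑ p ∈ Ico (d1 + 1) (d2 + 1), g (p - 1) * Z x p)
        - ∑ p ∈ Ico (d1 + 1) (d2 + 1), g p * Z x p := by
    rw [← Finset.sum_sub_distrib]
    apply Finset.sum_congr rfl
    intro p _
    ring
  have ht : ∑ p ∈ Ico (d2 + 1) (n + 1), g p * (Z x' p - Z x p)
      = (∑ p ∈ Ico (d2 + 1) (n + 1), g p * Z x' p)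
        - ∑ p ∈ Ico (d2 + 1) (n + 1), g p * Z x p := by
    rw [← Finset.sum_sub_distrib]
    apply Finset.sum_congr rfl
    intro p _
    ring
  rw [hm, ht]
  ring

private lemma tail_eq {n : ℕ} (x x' : Fin n → Fin 2) (g : ℕ → ℤ) (d2 e1 e2 : ℕ)
    (he1 : d2 < e1) (he1n : e1 ≤ n) (he2 : d2 < e2) (he2n : e2 ≤ n) (hne : e1 ≠ e2)
    (hflip1 : Z x' e1 = 1 - Z x e1) (hflip2 : Z x' e2 = 1 - Z x e2)
    (hsame : ∀ p, d2 < p → p ≤ n → p ≠ e1 → p ≠ e2 → Z x' p = Z x p) :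
    ∑ p ∈ Ico (d2 + 1) (n + 1), g p * (Z x' p - Z x p) =
      g e1 * (1 - 2 * Z x e1) + g e2 * (1 - 2 * Z x e2) := by
  rw [Finset.sum_eq_add_of_mem e1 e2 (by rw [Finset.mem_Ico]; omega)
    (by rw [Finset.mem_Ico]; omega) hne ?_]
  · rw [hflip1, hflip2]; ring
  · intro p hp hpe
    have hm := Finset.mem_Ico.mp hp
    rw [hsame p (by omega) (by omega) hpe.1 hpe.2]
    ring

private lemma coreLem (d1 d2 a b : ℕ) (hd2b : d2 ≤ b)
    (c : ℕ → ℤ) (hc0 : ∀ p, 0 ≤ c p)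
    (hS : ∑ p ∈ Ico (d1 + 1) (d2 + 1), c p = (a : ℤ) - b)
    (hS2 : ∑ p ∈ Ico (d1 + 1) (d2 + 1), (p : ℤ) * c p = wf a - wf b) :
    a = b := by
  have hS0 : 0 ≤ (a : ℤ) - b := hS ▸ Finset.sum_nonneg (fun p _ => hc0 p)
  have hba : b ≤ a := by omega
  have h1 : ∑ p ∈ Ico (d1 + 1) (d2 + 1), (p : ℤ) * c p
      ≤ (d2 : ℤ) * ∑ p ∈ Ico (d1 + 1) (d2 + 1), c p := by
    rw [Finset.mul_sum]
    apply Finset.sum_le_sum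
    intro p hp
    have hm := Finset.mem_Ico.mp hp
    have hpd : (p : ℤ) ≤ d2 := by exact_mod_cast (by omega : p ≤ d2)
    exact mul_le_mul_of_nonneg_right hpd (hc0 p)
  have h2 : ((b : ℤ) + 1) * ((a : ℤ) - b) ≤ wf a - wf b := wf_diff_ge a b hba
  have key : ((b : ℤ) + 1) * ((a : ℤ) - b) ≤ (d2 : ℤ) * ((a : ℤ) - b) := by
    calc ((b : ℤ) + 1) * ((a : ℤ) - b) ≤ wf a - wf b := h2
      _ = ∑ p ∈ Ico (d1 + 1) (d2 + 1), (p : ℤ) * c p := hS2.symm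
      _ ≤ (d2 : ℤ) * ∑ p ∈ Ico (d1 + 1) (d2 + 1), c p := h1
      _ = (d2 : ℤ) * ((a : ℤ) - b) := by rw [hS]
  have hd2b' : (d2 : ℤ) ≤ b := by exact_mod_cast hd2b
  have hab : (a : ℤ) - b ≤ 0 := by nlinarith [key, hS0, hd2b']
  omega

private lemma finTwoFlipSymm {a b : Fin 2} (h : a = 1 - b) : b = 1 - a := by
  revert h; revert a b; decide


set_option maxHeartbeats 2000000 in
/-- Case (vi): d1 ≤ d2 < e1 and d1 ≤ d2 < e2 implies x = x'. -/
theorem stmt14 (n : ℕ) (hn : 2 ≤ n) (c0 c1 c2 : ℕ)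
    (hc0 : c0 < 4) (hc1 : c1 < 2 * n) (hc2 : c2 < 2 * n ^ 2)
    (x x' : Fin n → Fin 2)
    (hx : x ∈ codeC n c0 c1 c2) (hx' : x' ∈ codeC n c0 c1 c2)
    (d1 e1 d2 e2 : ℕ)
    (hd1 : d1 ∈ Finset.Icc 1 n) (he1 : e1 ∈ Finset.Icc 1 n)
    (hd2 : d2 ∈ Finset.Icc 1 n) (he2 : e2 ∈ Finset.Icc 1 n)
    (h1 : d1 ≠ e1) (h2 : d2 ≠ e2)
    (hE : delSub x d1 e1 = delSub x' d2 e2)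
    (hcase : (d1 ≤ d2 ∧ d2 < e1) ∧ (d1 ≤ d2 ∧ d2 < e2)) :
    x = x' := by
  classical
  obtain ⟨⟨h12, hd2e1⟩, ⟨-, hd2e2⟩⟩ := hcase
  rw [Finset.mem_Icc] at hd1 he1 hd2 he2
  obtain ⟨hd1l, hd1r⟩ := hd1
  obtain ⟨he1l, he1r⟩ := he1
  obtain ⟨hd2l, hd2r⟩ := hd2
  obtain ⟨he2l, he2r⟩ := he2
  simp only [codeC, Finset.mem_filter, Finset.mem_univ, true_and] at hx hx'
  obtain ⟨-, -, hw, hv1, hv2⟩ := hx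
  obtain ⟨-, -, hw', hv1', hv2'⟩ := hx'
  have dvd0 : (4 : ℤ) ∣ (wt x' : ℤ) - (wt x : ℤ) := by
    have h : wt x ≡ wt x' [MOD 4] := by unfold Nat.ModEq; rw [hw, hw']
    exact h.dvd
  have dvd1 : (2 * (n : ℤ)) ∣ (vtSyn 1 x' : ℤ) - (vtSyn 1 x : ℤ) := by
    have h : vtSyn 1 x ≡ vtSyn 1 x' [MOD 2 * n] := by unfold Nat.ModEq; rw [hv1, hv1']
    have := h.dvd
    push_cast at this ⊢
    exact this
  have dvd2 : (2 * (n : ℤ) ^ 2) ∣ (vtSyn 2 x' : ℤ) - (vtSyn 2 x : ℤ) := by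
    have h : vtSyn 2 x ≡ vtSyn 2 x' [MOD 2 * n ^ 2] := by unfold Nat.ModEq; rw [hv2, hv2']
    have := h.dvd
    push_cast at this ⊢
    exact this
  have F1 := fact1 x x' d1 e1 d2 e2 hE h12 hd2e1 he1r hd2e2
  have F2 := fact2 x x' d1 e1 d2 e2 hE hd1l hd2e1 he1r hd2e2 he2r
  have F3 := fact3 x x' d1 e1 d2 e2 hE hd1l h12 hd2e1 he1r hd2e2
  have F1Z : ∀ p, 1 ≤ p → p < d1 → Z x p = Z x' p := fun p a b => by
    rw [Z, Z, F1 p a b]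
  have F2Z : ∀ p, d1 ≤ p → p < d2 → Z x' p = Z x (p + 1) := fun p a b => by
    rw [Z, Z, F2 p a b]
  -- basic bounds
  have hZd1 := Z_nonneg x d1
  have hZd1' := Z_le_one x d1
  have hZd2 := Z_nonneg x' d2
  have hZd2' := Z_le_one x' d2
  have hS0 : 0 ≤ ∑ p ∈ Finset.Ico (d1 + 1) (d2 + 1), Z x p :=
    Finset.sum_nonneg fun p _ => Z_nonneg x p
  have hS1 : ∑ p ∈ Finset.Ico (d1 + 1) (d2 + 1), Z x p ≤ (d2 : ℤ) - d1 := by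
    have h := Finset.sum_le_card_nsmul (Finset.Ico (d1 + 1) (d2 + 1)) (Z x) 1
      (fun p _ => Z_le_one x p)
    rw [Nat.card_Ico, nsmul_eq_mul, mul_one] at h
    have hc : ((d2 + 1 - (d1 + 1) : ℕ) : ℤ) = (d2 : ℤ) - d1 := by omega
    rw [hc] at h
    exact h
  have hS20 : 0 ≤ ∑ p ∈ Finset.Ico (d1 + 1) (d2 + 1), (p : ℤ) * Z x p :=
    Finset.sum_nonneg fun p _ => mul_nonneg (Int.natCast_nonneg _) (Z_nonneg x p)
  have hpsum : ∑ p ∈ Finset.Ico (d1 + 1) (d2 + 1), (p : ℤ) = wf d2 - wf d1 :=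
    (wf_diff d2 d1 h12).symm
  have hS21 : ∑ p ∈ Finset.Ico (d1 + 1) (d2 + 1), (p : ℤ) * Z x p ≤ wf d2 - wf d1 := by
    rw [← hpsum]
    apply Finset.sum_le_sum
    intro p _
    nlinarith [Z_le_one x p, Z_nonneg x p, Int.natCast_nonneg p]
  -- delta splits
  have DW := delta_split x x' (fun _ => (1 : ℤ)) d1 d2 hd1l h12 (by omega) F1Z F2Z
  simp only [one_mul, sub_self, zero_mul, Finset.sum_const_zero, add_zero] at DW
  rw [← cast_wt x', ← cast_wt x] at DW
  have D1 := delta_split x x' (fun p => (p : ℤ)) d1 d2 hd1l h12 (by omega) F1Z F2Z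
  have hmidD1 : ∑ p ∈ Finset.Ico (d1 + 1) (d2 + 1), (((p - 1 : ℕ) : ℤ) - (p : ℤ)) * Z x p
      = -∑ p ∈ Finset.Ico (d1 + 1) (d2 + 1), Z x p := by
    rw [← Finset.sum_neg_distrib]
    apply Finset.sum_congr rfl
    intro p hp
    have hm := Finset.mem_Ico.mp hp
    have hc : ((p - 1 : ℕ) : ℤ) = (p : ℤ) - 1 := by omega
    rw [hc]; ring
  rw [hmidD1] at D1
  have c1x : (vtSyn 1 x : ℤ) = ∑ p ∈ Finset.Icc 1 n, (p : ℤ) * Z x p := by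
    rw [cast_vt]
    apply Finset.sum_congr rfl
    intro p _
    simp [Nat.card_Icc]
  have c1x' : (vtSyn 1 x' : ℤ) = ∑ p ∈ Finset.Icc 1 n, (p : ℤ) * Z x' p := by
    rw [cast_vt]
    apply Finset.sum_congr rfl
    intro p _
    simp [Nat.card_Icc]
  rw [← c1x, ← c1x'] at D1
  have D2 := delta_split x x' wf d1 d2 hd1l h12 (by omega) F1Z F2Z
  have hmidD2 : ∑ p ∈ Finset.Ico (d1 + 1) (d2 + 1), (wf (p - 1) - wf p) * Z x p
      = -∑ p ∈ Finset.Ico (d1 + 1) (d2 + 1), (p : ℤ) * Z x p := by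
    rw [← Finset.sum_neg_distrib]
    apply Finset.sum_congr rfl
    intro p hp
    have hm := Finset.mem_Ico.mp hp
    have hc : wf p = wf (p - 1) + p := wf_succ p (by omega)
    rw [show wf (p - 1) - wf p = -(p : ℤ) by omega]
    ring
  rw [hmidD2] at D2
  have c2x : (vtSyn 2 x : ℤ) = ∑ p ∈ Finset.Icc 1 n, wf p * Z x p := by
    rw [cast_vt]
    apply Finset.sum_congr rfl
    intro p _
    congr 1
    unfold wf
    norm_num
  have c2x' : (vtSyn 2 x' : ℤ) = ∑ p ∈ Finset.Icc 1 n, wf p * Z x' p := by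
    rw [cast_vt]
    apply Finset.sum_congr rfl
    intro p _
    congr 1
    unfold wf
    norm_num
  rw [← c2x, ← c2x'] at D2
  -- cast bounds
  have hwfn : wf n ≤ (n : ℤ) ^ 2 := wf_le_sq n
  have hwfd1 : wf 1 ≤ wf d1 := wf_mono hd1l
  have hwfd2 : wf d2 ≤ wf n := wf_mono hd2r
  have hwfe1 : wf e1 ≤ wf n := wf_mono he1r
  have hwfe2 : wf e2 ≤ wf n := wf_mono he2r
  have hwfe1' : wf 1 ≤ wf e1 := wf_mono he1l
  have hwfe2' : wf 1 ≤ wf e2 := wf_mono he2l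
  have hwf1 : wf 1 = 1 := wf_one
  have hd1z : (1 : ℤ) ≤ (d1 : ℤ) := by exact_mod_cast hd1l
  have hd2z : (d2 : ℤ) ≤ (n : ℤ) := by exact_mod_cast hd2r
  have hd12z : (d1 : ℤ) ≤ (d2 : ℤ) := by exact_mod_cast h12
  have he1z : (e1 : ℤ) ≤ (n : ℤ) := by exact_mod_cast he1r
  have he2z : (e2 : ℤ) ≤ (n : ℤ) := by exact_mod_cast he2r
  have he1z' : (1 : ℤ) ≤ (e1 : ℤ) := by exact_mod_cast he1l
  have he2z' : (1 : ℤ) ≤ (e2 : ℤ) := by exact_mod_cast he2l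
  have hd2e1z : (d2 : ℤ) < (e1 : ℤ) := by exact_mod_cast hd2e1
  have hd2e2z : (d2 : ℤ) < (e2 : ℤ) := by exact_mod_cast hd2e2
  have hnz : (2 : ℤ) ≤ (n : ℤ) := by exact_mod_cast hn
  have hfin : ∀ a : Fin 2, ((a : ℕ) : ℤ) = 0 ∨ ((a : ℕ) : ℤ) = 1 := by decide
  by_cases heq : e1 = e2
  · -- Case e1 = e2
    subst heq
    have hsame : ∀ p, d2 < p → p ≤ n → getBit x p = getBit x' p := by
      intro p hp hpn
      have h3 := F3 p hp hpn
      by_cases hpe : p = e1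
      · rw [if_pos hpe, if_pos hpe] at h3
        exact finTwoFlipCancel h3
      · rw [if_neg hpe, if_neg hpe] at h3
        exact h3
    have hsZ : ∀ p, d2 < p → p ≤ n → Z x' p = Z x p := fun p a b => by
      rw [Z, Z, hsame p a b]
    have tW : ∑ p ∈ Finset.Ico (d2 + 1) (n + 1), (Z x' p - Z x p) = 0 := by
      apply Finset.sum_eq_zero
      intro p hp
      have hm := Finset.mem_Ico.mp hp
      rw [hsZ p (by omega) (by omega)]
      ring
    have t1 : ∑ p ∈ Finset.Ico (d2 + 1) (n + 1), (p : ℤ) * (Z x' p - Z x p) = 0 := by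
      apply Finset.sum_eq_zero
      intro p hp
      have hm := Finset.mem_Ico.mp hp
      rw [hsZ p (by omega) (by omega)]
      ring
    have t2 : ∑ p ∈ Finset.Ico (d2 + 1) (n + 1), wf p * (Z x' p - Z x p) = 0 := by
      apply Finset.sum_eq_zero
      intro p hp
      have hm := Finset.mem_Ico.mp hp
      rw [hsZ p (by omega) (by omega)]
      ring
    rw [tW, add_zero] at DW
    rw [t1, add_zero] at D1
    have hW0 : (wt x' : ℤ) - (wt x : ℤ) = 0 := by
      apply dvd_small 4 _ dvd0
      rw [abs_lt]
      constructor <;> linarith [DW]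
    have htt' : Z x' d2 = Z x d1 := by linarith [DW, hW0]
    have ht := hfin (getBit x d1)
    have hD1 : (vtSyn 1 x' : ℤ) - (vtSyn 1 x : ℤ)
        = ((d2 : ℤ) - d1) * Z x d1 - ∑ p ∈ Finset.Ico (d1 + 1) (d2 + 1), Z x p := by
      rw [D1, htt']
      ring
    have h10 : (vtSyn 1 x' : ℤ) - (vtSyn 1 x : ℤ) = 0 := by
      apply dvd_small (2 * (n : ℤ)) _ dvd1
      rw [abs_lt, hD1]
      rcases ht with h | h
      · rw [show Z x d1 = 0 from h, mul_zero, zero_sub]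
        constructor <;> linarith
      · rw [show Z x d1 = 1 from h, mul_one]
        constructor <;> linarith
    have hall : ∀ p ∈ Finset.Ico (d1 + 1) (d2 + 1), Z x p = Z x d1 := by
      rcases ht with h | h
      · have hzS : ∑ p ∈ Finset.Ico (d1 + 1) (d2 + 1), Z x p = 0 := by
          rw [hD1, show Z x d1 = 0 from h] at h10
          linarith
        have hz := (Finset.sum_eq_zero_iff_of_nonneg (fun p _ => Z_nonneg x p)).mp hzS
        intro p hp
        rw [show Z x d1 = 0 from h]
        exact hz p hp
      · have hzS : ∑ p ∈ Finset.Ico (d1 + 1) (d2 + 1), Z x p = (d2 : ℤ) - d1 := by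
          rw [hD1, show Z x d1 = 1 from h] at h10
          linarith
        have hzero : ∑ p ∈ Finset.Ico (d1 + 1) (d2 + 1), (1 - Z x p) = 0 := by
          rw [Finset.sum_sub_distrib, Finset.sum_const, Nat.card_Ico, nsmul_eq_mul, mul_one]
          rw [show ((d2 + 1 - (d1 + 1) : ℕ) : ℤ) = (d2 : ℤ) - d1 by omega, hzS]
          ring
        have hz := (Finset.sum_eq_zero_iff_of_nonneg
          (fun p _ => by linarith [Z_le_one x p])).mp hzero
        intro p hp
        rw [show Z x d1 = 1 from h]
        have := hz p hp
        linarith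
    -- conclude x = x'
    funext i
    have hib : getBit x ((i : ℕ) + 1) = x i := getBit_fin x i
    have hib' : getBit x' ((i : ℕ) + 1) = x' i := getBit_fin x' i
    rw [← hib, ← hib']
    have hp1 : 1 ≤ (i : ℕ) + 1 := by omega
    have hpn : (i : ℕ) + 1 ≤ n := by have := i.isLt; omega
    by_cases hc1' : (i : ℕ) + 1 < d1
    · exact F1 _ hp1 hc1'
    · by_cases hc2' : d2 < (i : ℕ) + 1
      · exact hsame _ hc2' hpn
      · have hd1p : d1 ≤ (i : ℕ) + 1 := by omega
        have hpd2 : (i : ℕ) + 1 ≤ d2 := by omega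
        have hzx : Z x ((i : ℕ) + 1) = Z x d1 := by
          rcases Nat.eq_or_lt_of_le hd1p with h | h
          · rw [← h]
          · exact hall _ (Finset.mem_Ico.mpr ⟨by omega, by omega⟩)
        have hzx' : Z x' ((i : ℕ) + 1) = Z x d1 := by
          rcases Nat.eq_or_lt_of_le hpd2 with h | h
          · rw [h]
            exact htt'
          · rw [F2Z _ hd1p h]
            rcases Nat.eq_or_lt_of_le (show d1 ≤ (i : ℕ) + 1 + 1 - 1 from by omega) with _ | _
            · exact hall _ (Finset.mem_Ico.mpr ⟨by omega, by omega⟩)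
            · exact hall _ (Finset.mem_Ico.mpr ⟨by omega, by omega⟩)
        exact finTwoInj (show ((getBit x ((i : ℕ) + 1) : ℕ) : ℤ) = ((getBit x' ((i : ℕ) + 1) : ℕ) : ℤ) from by
          rw [show ((getBit x ((i : ℕ) + 1) : ℕ) : ℤ) = Z x ((i : ℕ) + 1) from rfl,
            show ((getBit x' ((i : ℕ) + 1) : ℕ) : ℤ) = Z x' ((i : ℕ) + 1) from rfl, hzx, hzx'])
  · -- Case e1 ≠ e2
    exfalso
    apply heq
    have hZcases : ∀ (y : Fin n → Fin 2) (p : ℕ), Z y p = 0 ∨ Z y p = 1 := by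
      intro y p
      exact hfin (getBit y p)
    have h3a := F3 e1 hd2e1 he1r
    rw [if_pos rfl, if_neg heq] at h3a
    have hflip1 : Z x' e1 = 1 - Z x e1 := finTwoFlip h3a.symm
    have h3b := F3 e2 hd2e2 he2r
    rw [if_neg (fun hh => heq hh.symm), if_pos rfl] at h3b
    have hflip2 : Z x' e2 = 1 - Z x e2 := finTwoFlip (finTwoFlipSymm h3b)
    have hsame : ∀ p, d2 < p → p ≤ n → p ≠ e1 → p ≠ e2 → Z x' p = Z x p := by
      intro p hp hpn hpe1 hpe2
      have h3 := F3 p hp hpn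
      rw [if_neg hpe1, if_neg hpe2] at h3
      rw [Z, Z, h3]
    have TW := tail_eq x x' (fun _ => (1 : ℤ)) d2 e1 e2 hd2e1 he1r hd2e2 he2r heq
      hflip1 hflip2 hsame
    simp only [one_mul] at TW
    rw [TW] at DW
    have T1 := tail_eq x x' (fun p => (p : ℤ)) d2 e1 e2 hd2e1 he1r hd2e2 he2r heq
      hflip1 hflip2 hsame
    rw [T1] at D1
    have T2 := tail_eq x x' wf d2 e1 e2 hd2e1 he1r hd2e2 he2r heq
      hflip1 hflip2 hsame
    rw [T2] at D2
    have hα0 := Z_nonneg x e1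
    have hα1 := Z_le_one x e1
    have hβ0 := Z_nonneg x e2
    have hβ1 := Z_le_one x e2
    have hW0 : (wt x' : ℤ) - (wt x : ℤ) = 0 := by
      apply dvd_small 4 _ dvd0
      rw [abs_lt]
      constructor <;> linarith [DW]
    have hαβ : Z x e1 + Z x e2 = 1 := by
      rcases hZcases x e1 with a | a <;> rcases hZcases x e2 with b | b <;>
        rcases hZcases x d1 with h | h <;> rcases hZcases x' d2 with h' | h' <;>
        rw [a, b] <;> rw [h, h'] at DW <;> linarith [DW, hW0]
    have htt' : Z x' d2 = Z x d1 := by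
      rcases hZcases x d1 with h | h <;> rcases hZcases x' d2 with h' | h' <;>
        rw [h, h'] <;> rw [h, h'] at DW <;> linarith [DW, hW0, hαβ]
    have hsq : (0 : ℤ) ≤ (n : ℤ) ^ 2 := sq_nonneg _
    have h10 : (vtSyn 1 x' : ℤ) - (vtSyn 1 x : ℤ) = 0 := by
      apply dvd_small (2 * (n : ℤ)) _ dvd1
      rw [abs_lt, D1, htt']
      rcases hZcases x e1 with a | a
      · have b : Z x e2 = 1 := by linarith
        rw [a, b]
        rcases hZcases x d1 with h | h <;> rw [h] <;> constructor <;> linarith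
      · have b : Z x e2 = 0 := by linarith
        rw [a, b]
        rcases hZcases x d1 with h | h <;> rw [h] <;> constructor <;> linarith
    have h20 : (vtSyn 2 x' : ℤ) - (vtSyn 2 x : ℤ) = 0 := by
      apply dvd_small (2 * (n : ℤ) ^ 2) _ dvd2
      rw [abs_lt, D2, htt']
      rcases hZcases x e1 with a | a
      · have b : Z x e2 = 1 := by linarith
        rw [a, b]
        rcases hZcases x d1 with h | h <;> rw [h] <;> constructor <;> linarith
      · have b : Z x e2 = 0 := by linarith
        rw [a, b]
        rcases hZcases x d1 with h | h <;> rw [h] <;> constructor <;> linarith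
    rw [D1, htt'] at h10
    rw [D2, htt'] at h20
    have hcard : ∑ _p ∈ Finset.Ico (d1 + 1) (d2 + 1), (1 : ℤ) = (d2 : ℤ) - d1 := by
      rw [Finset.sum_const, Nat.card_Ico, nsmul_eq_mul, mul_one]
      omega
    have hsub : ∑ p ∈ Finset.Ico (d1 + 1) (d2 + 1), (1 - Z x p)
        = ((d2 : ℤ) - d1) - ∑ p ∈ Finset.Ico (d1 + 1) (d2 + 1), Z x p := by
      rw [Finset.sum_sub_distrib, hcard]
    have hsub2 : ∑ p ∈ Finset.Ico (d1 + 1) (d2 + 1), (p : ℤ) * (1 - Z x p)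
        = (wf d2 - wf d1) - ∑ p ∈ Finset.Ico (d1 + 1) (d2 + 1), (p : ℤ) * Z x p := by
      have hc : ∀ p ∈ Finset.Ico (d1 + 1) (d2 + 1),
          (p : ℤ) * (1 - Z x p) = (p : ℤ) - (p : ℤ) * Z x p := fun p _ => by ring
      rw [Finset.sum_congr rfl hc, Finset.sum_sub_distrib, hpsum]
    have hcomp0 : ∀ p, (0 : ℤ) ≤ 1 - Z x p := fun p => by linarith [Z_le_one x p]
    rcases hZcases x d1 with h | h
    · rw [h] at h10 h20
      rcases hZcases x e1 with a | a
      · have b : Z x e2 = 1 := by linarith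
        rw [a, b] at h10 h20
        apply coreLem d1 d2 e1 e2 (le_of_lt hd2e2) (Z x) (Z_nonneg x)
        · linarith [h10]
        · linarith [h20]
      · have b : Z x e2 = 0 := by linarith
        rw [a, b] at h10 h20
        symm
        apply coreLem d1 d2 e2 e1 (le_of_lt hd2e1) (Z x) (Z_nonneg x)
        · linarith [h10]
        · linarith [h20]
    · rw [h] at h10 h20
      rcases hZcases x e1 with a | a
      · have b : Z x e2 = 1 := by linarith
        rw [a, b] at h10 h20
        symm
        apply coreLem d1 d2 e2 e1 (le_of_lt hd2e1) (fun p => 1 - Z x p) hcomp0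
        · rw [hsub]
          linarith [h10]
        · rw [hsub2]
          linarith [h20]
      · have b : Z x e2 = 0 := by linarith
        rw [a, b] at h10 h20
        apply coreLem d1 d2 e1 e2 (le_of_lt hd2e2) (fun p => 1 - Z x p) hcomp0
        · rw [hsub]
          linarith [h10]
        · rw [hsub2]
          linarith [h20]
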